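/- For each i ∈ I and each λ ∈ Λ_i, one has e_i · A^{>λ} · e_i = (e_i A e_i)^{>λ}, where A^{>λ} is the F-span of all basis elements c_{uv}^μ with μ > λ, and (e_i A e_i)^{>λ} is the F-span of {c_{uv}^{λ'} : u,v ∈ T(λ',i) for some λ' ∈ Λ_i with λ' > λ}. -/

import Mathlib

open scoped Classical

noncomputable section


/-- A cellular algebra over a field `F`, in the sense of Graham–Lehrer: an associative unital
`F`-algebra `A` together with a finite poset `Λ`, finite nonempty index sets `T l`, a basis
`c l s t` indexed by triples, an `F`-linear anti-automorphism `star` fixing the basis up to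
transposition, and structure coefficients `r` satisfying the cellular multiplication rule
modulo the span `A^{>l}` of higher basis elements. -/
structure CellularAlgebra (F : Type*) [Field F] (A : Type*) [Ring A] [Algebra F A]
    (Λ : Type*) [PartialOrder Λ] [Fintype Λ]
    (T : Λ → Type*) [∀ l, Fintype (T l)] [∀ l, Nonempty (T l)] where
  c : (l : Λ) → T l → T l → A
  basis : Module.Basis ((l : Λ) × (T l × T l)) F A
  basis_eq : ∀ (l : Λ) (s t : T l), basis ⟨l, (s, t)⟩ = c l s t
  star : A →ₗ[F] A
  star_mul : ∀ a b : A, star (a * b) = star b * star a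
  star_star : ∀ a : A, star (star a) = a
  star_c : ∀ (l : Λ) (s t : T l), star (c l s t) = c l t s
  r : A → (l : Λ) → T l → T l → F
  cell_mem : ∀ (a : A) (l : Λ) (s t : T l),
    a * c l s t - ∑ u : T l, r a l u s • c l u t ∈
      Submodule.span F {x : A | ∃ μ : Λ, l < μ ∧ ∃ p q : T μ, x = c μ p q}

namespace CellularAlgebra

variable {F : Type*} [Field F] {A : Type*} [Ring A] [Algebra F A]
  {Λ : Type*} [PartialOrder Λ] [Fintype Λ]
  {T : Λ → Type*} [∀ l, Fintype (T l)] [∀ l, Nonempty (T l)]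
  (cd : CellularAlgebra F A Λ T)

/-- The ideal-like subspace `A^{>l}`, the `F`-span of all basis elements of strictly
higher degree. -/
def spanAbove (l : Λ) : Submodule F A :=
  Submodule.span F {x : A | ∃ μ : Λ, l < μ ∧ ∃ p q : T μ, x = cd.c μ p q}

variable {I : Type*} [Fintype I] (e : I → A)

/-- Assumptions (A1)–(A4): a decomposition of `1` into nonzero pairwise orthogonal
idempotents `e i`, fixed by `star`, such that each basis row is absorbed by some `e i`. -/
structure Decomp : Prop where
  ne_zero : ∀ i, e i ≠ 0
  idem : ∀ i, e i * e i = e i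
  orth : ∀ i j, i ≠ j → e i * e j = 0
  sum_eq_one : ∑ i, e i = 1
  star_fix : ∀ i, cd.star (e i) = e i
  exists_idx : ∀ (l : Λ) (t : T l), ∃ i : I, ∀ s : T l, e i * cd.c l t s = cd.c l t s

/-- `T(λ, i)`. -/
def Tset (i : I) (l : Λ) : Set (T l) :=
  {t : T l | ∀ s : T l, e i * cd.c l t s = cd.c l t s}

/-- `Λ_i`. -/
def LambdaSet (i : I) : Set Λ := {l : Λ | (cd.Tset e i l).Nonempty}

/-- `I_λ`. -/
def Iset (l : Λ) : Set I := {i : I | l ∈ cd.LambdaSet e i}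


/-- The corner subspace `e_i A e_i = {x | e i * x = x ∧ x * e i = x}` of `A`. -/
def corner (cA : CellularAlgebra F A Λ T) (e' : I → A) (i : I) : Submodule F A where
  carrier := {x : A | e' i * x = x ∧ x * e' i = x}
  add_mem' := fun ha hb => ⟨by rw [mul_add, ha.1, hb.1], by rw [add_mul, ha.2, hb.2]⟩
  zero_mem' := ⟨mul_zero _, zero_mul _⟩
  smul_mem' := fun r x hx => ⟨by rw [mul_smul_comm, hx.1], by rw [smul_mul_assoc, hx.2]⟩

/-- `(e_i A e_i)^{>l}`: the span of the cellular basis elements of `e_i A e_i` of strictly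
higher degree. -/
def cornerSpanAbove (i : I) (l : Λ) : Submodule F A :=
  Submodule.span F {x : A | ∃ μ : Λ, l < μ ∧
    ∃ p ∈ cd.Tset e i μ, ∃ q ∈ cd.Tset e i μ, x = cd.c μ p q}

lemma c_ne_zero (μ : Λ) (p q : T μ) : cd.c μ p q ≠ 0 := by
  rw [← cd.basis_eq]; exact cd.basis.ne_zero _

lemma e_mul_c (hd : cd.Decomp e) (i : I) (μ : Λ) (p q : T μ) :
    e i * cd.c μ p q = if p ∈ cd.Tset e i μ then cd.c μ p q else 0 := by
  obtain ⟨j, hj⟩ := hd.exists_idx μ p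
  by_cases h : i = j
  · subst h
    have hp : p ∈ cd.Tset e i μ := hj
    rw [if_pos hp]
    exact hj q
  · have h0 : e i * cd.c μ p q = 0 := by
      rw [← hj q, ← mul_assoc, hd.orth i j h, zero_mul]
    rw [h0, if_neg]
    intro hp
    exact cd.c_ne_zero μ p q (by rw [← hp q, h0])

lemma c_mul_e (hd : cd.Decomp e) (i : I) (μ : Λ) (p q : T μ) :
    cd.c μ p q * e i = if q ∈ cd.Tset e i μ then cd.c μ p q else 0 := by
  have h := congrArg cd.star (cd.e_mul_c e hd i μ q p)
  rw [cd.star_mul, cd.star_c, hd.star_fix, apply_ite cd.star, cd.star_c, map_zero] at h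
  exact h

/-- `e_i · A^{>λ} · e_i = (e_i A e_i)^{>λ}` for every `λ ∈ Λ_i`. -/
theorem statement_4 (hd : cd.Decomp e) (i : I) (l : Λ) (hl : l ∈ cd.LambdaSet e i) :
    Submodule.map (LinearMap.mulLeft F (e i) ∘ₗ LinearMap.mulRight F (e i))
        (cd.spanAbove l) = cd.cornerSpanAbove e i l := by
  rw [spanAbove, Submodule.map_span]
  apply le_antisymm
  · rw [Submodule.span_le]
    rintro _ ⟨x, ⟨μ, hμ, p, q, rfl⟩, rfl⟩
    simp only [LinearMap.coe_comp, Function.comp_apply, LinearMap.mulLeft_apply,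
      LinearMap.mulRight_apply]
    rw [cd.c_mul_e e hd, mul_ite, cd.e_mul_c e hd, mul_zero]
    by_cases hq : q ∈ cd.Tset e i μ
    · rw [if_pos hq]
      by_cases hp : p ∈ cd.Tset e i μ
      · rw [if_pos hp]
        exact Submodule.subset_span ⟨μ, hμ, p, hp, q, hq, rfl⟩
      · rw [if_neg hp]; exact (cd.cornerSpanAbove e i l).zero_mem
    · rw [if_neg hq]; exact (cd.cornerSpanAbove e i l).zero_mem
  · rw [cornerSpanAbove, Submodule.span_le]
    rintro _ ⟨μ, hμ, p, hp, q, hq, rfl⟩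
    apply Submodule.subset_span
    refine ⟨cd.c μ p q, ⟨μ, hμ, p, q, rfl⟩, ?_⟩
    simp only [LinearMap.coe_comp, Function.comp_apply, LinearMap.mulLeft_apply,
      LinearMap.mulRight_apply]
    rw [cd.c_mul_e e hd, if_pos hq, cd.e_mul_c e hd, if_pos hp]

end CellularAlgebra
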